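/- Let K = 2^m with m ≥ 3 (so K ≥ 8). Then there exists a vector a ∈ ℝ^{K−1} with all entries strictly positive such that Σ_{i=1}^{K−1} â_i²·(b_i(a) − b̄(a)) > 0; that is, the time derivative of the metric M(a) = (1/2)·Σ_i (â_i − 1/(K−1))² along the reduced cross-entropy gradient flow da_i/dt = a_i b_i(a)/D(a) is strictly positive at a. Consequently, for K ≥ 8 the metric M is not monotonically decreasing along all trajectories with positive initialization. -/

import Mathlib

open Matrix Finset

noncomputable section

/-- The Sylvester Hadamard matrix `Φ_{2^m}`, defined recursively by `Φ₁ = (1)` and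
`Φ_{2^{m+1}} = [[Φ_{2^m}, Φ_{2^m}], [Φ_{2^m}, -Φ_{2^m}]]`. -/
def sylvester : (m : ℕ) → Matrix (Fin (2 ^ m)) (Fin (2 ^ m)) ℝ
  | 0 => Matrix.of fun _ _ => 1
  | m + 1 => Matrix.of fun i j =>
      (if 2 ^ m ≤ i.val ∧ 2 ^ m ≤ j.val then -1 else 1) *
        sylvester m ⟨i.val % 2 ^ m, Nat.mod_lt _ (Nat.two_pow_pos m)⟩
          ⟨j.val % 2 ^ m, Nat.mod_lt _ (Nat.two_pow_pos m)⟩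

/-- The core `X = Φ[2:K, 2:K]` obtained by deleting the first row and column of `Φ`. -/
def hadCore (m : ℕ) : Matrix (Fin (2 ^ m - 1)) (Fin (2 ^ m - 1)) ℝ :=
  Matrix.of fun i j =>
    sylvester m ⟨i.val + 1, by have h1 := Nat.two_pow_pos m; have h2 := i.isLt; omega⟩
      ⟨j.val + 1, by have h1 := Nat.two_pow_pos m; have h2 := j.isLt; omega⟩

/-- `Ψ = 1 1ᵀ − X`. -/
def PsiM (m : ℕ) : Matrix (Fin (2 ^ m - 1)) (Fin (2 ^ m - 1)) ℝ :=
  Matrix.of fun i j => 1 - hadCore m i j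

/-- `b_i(a) = Σ_j Ψ_{ij} exp(−(Ψa)_j)`. -/
def bVec (m : ℕ) (a : Fin (2 ^ m - 1) → ℝ) (i : Fin (2 ^ m - 1)) : ℝ :=
  ∑ j, PsiM m i j * Real.exp (-((PsiM m).mulVec a j))

/-- `D(a) = 1 + Σ_j exp(−(Ψa)_j)`. -/
def Dden (m : ℕ) (a : Fin (2 ^ m - 1) → ℝ) : ℝ :=
  1 + ∑ j, Real.exp (-((PsiM m).mulVec a j))

/-- The energy `E(a) = log(1 + Σ_j exp(−(Ψa)_j))`. -/
def energyE (m : ℕ) (a : Fin (2 ^ m - 1) → ℝ) : ℝ :=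
  Real.log (1 + ∑ j, Real.exp (-((PsiM m).mulVec a j)))

/-- `b̄(a) = Σ_j â_j b_j(a)` with `â = a / ‖a‖₁`. -/
def bbar (m : ℕ) (a : Fin (2 ^ m - 1) → ℝ) : ℝ :=
  ∑ j, (a j / ∑ k, a k) * bVec m a j

/-- `M(a) = (1/2) Σ_i (â_i − 1/(K−1))²`. -/
def Mmetric (m : ℕ) (a : Fin (2 ^ m - 1) → ℝ) : ℝ :=
  (1 / 2) * ∑ i, (a i / (∑ k, a k) - 1 / ((2 : ℝ) ^ m - 1)) ^ 2

lemma syl_symm : ∀ (m : ℕ) (x y : Fin (2 ^ m)), sylvester m x y = sylvester m y x := by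
  intro m
  induction m with
  | zero => intro x y; rfl
  | succ m ih =>
    intro x y
    simp only [sylvester, Matrix.of_apply]
    rw [ih]
    by_cases h1 : 2 ^ m ≤ x.val <;> by_cases h2 : 2 ^ m ≤ y.val <;>
      simp [h1, h2]

lemma syl_col0 : ∀ (m : ℕ) (x : Fin (2 ^ m)) (h : 0 < 2 ^ m), sylvester m x ⟨0, h⟩ = 1 := by
  intro m
  induction m with
  | zero => intro x h; rfl
  | succ m ih =>
    intro x h
    simp only [sylvester, Matrix.of_apply]
    rw [if_neg (by omega)]
    rw [show (⟨0 % 2 ^ m, Nat.mod_lt _ (Nat.two_pow_pos m)⟩ : Fin (2 ^ m)) =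
      ⟨0, Nat.two_pow_pos m⟩ from Fin.ext (Nat.zero_mod _), ih]
    ring

lemma syl_row0 (m : ℕ) (x : Fin (2 ^ m)) (h : 0 < 2 ^ m) : sylvester m ⟨0, h⟩ x = 1 := by
  rw [syl_symm, syl_col0]

lemma syl_congr (m : ℕ) (x y : Fin (2 ^ m)) (u v : ℕ) (hu' : u < 2 ^ m) (hv' : v < 2 ^ m)
    (hu : x.val = u) (hv : y.val = v) :
    sylvester m x y = sylvester m ⟨u, hu'⟩ ⟨v, hv'⟩ := by
  congr 1 <;> exact Fin.ext ‹_›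

lemma psi_symm (m : ℕ) (i j : Fin (2 ^ m - 1)) : PsiM m i j = PsiM m j i := by
  simp only [PsiM, hadCore, Matrix.of_apply]
  rw [syl_symm]

-- entry lemmas for level m+1
section entries
variable (m : ℕ)

lemma pow_succ_sub_one : 2 ^ (m + 1) - 1 = (2 ^ m - 1) + 1 + (2 ^ m - 1) := by
  have := Nat.one_le_two_pow (n := m); omega

lemma psi_low_low (i j : ℕ) (hi : i < 2 ^ m - 1) (hj : j < 2 ^ m - 1)
    (hi' : i < 2 ^ (m+1) - 1) (hj' : j < 2 ^ (m+1) - 1) :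
    PsiM (m+1) ⟨i, hi'⟩ ⟨j, hj'⟩ = PsiM m ⟨i, hi⟩ ⟨j, hj⟩ := by
  have hK := Nat.one_le_two_pow (n := m)
  simp only [PsiM, hadCore, Matrix.of_apply, sylvester]
  rw [if_neg (by omega), syl_congr m _ _ (i+1) (j+1) (by omega) (by omega)
    (by simp [Nat.mod_eq_of_lt (show i+1 < 2^m by omega)])
    (by simp [Nat.mod_eq_of_lt (show j+1 < 2^m by omega)])]
  ring

lemma psi_low_mid (i : ℕ) (hi : i < 2 ^ m - 1)
    (hi' : i < 2 ^ (m+1) - 1) (hn' : 2 ^ m - 1 < 2 ^ (m+1) - 1) :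
    PsiM (m+1) ⟨i, hi'⟩ ⟨2 ^ m - 1, hn'⟩ = 0 := by
  have hK := Nat.one_le_two_pow (n := m)
  simp only [PsiM, hadCore, Matrix.of_apply, sylvester]
  rw [if_neg (by omega), syl_congr m _ _ (i+1) 0 (by omega) (by omega)
    (by simp [Nat.mod_eq_of_lt (show i+1 < 2^m by omega)])
    (by simp [show 2^m - 1 + 1 = 2^m by omega]), syl_col0]
  ring

lemma psi_low_high (i j : ℕ) (hi : i < 2 ^ m - 1) (hj : j < 2 ^ m - 1)
    (hi' : i < 2 ^ (m+1) - 1) (hj' : 2 ^ m + j < 2 ^ (m+1) - 1) :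
    PsiM (m+1) ⟨i, hi'⟩ ⟨2 ^ m + j, hj'⟩ = PsiM m ⟨i, hi⟩ ⟨j, hj⟩ := by
  have hK := Nat.one_le_two_pow (n := m)
  simp only [PsiM, hadCore, Matrix.of_apply, sylvester]
  rw [if_neg (by omega), syl_congr m _ _ (i+1) (j+1) (by omega) (by omega)
    (by simp [Nat.mod_eq_of_lt (show i+1 < 2^m by omega)])
    (by simp [show 2^m + j + 1 = 2^m + (j+1) by omega,
      Nat.add_mod_left, Nat.mod_eq_of_lt (show j+1 < 2^m by omega)])]
  ring

lemma psi_mid_mid (hn' : 2 ^ m - 1 < 2 ^ (m+1) - 1) :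
    PsiM (m+1) ⟨2 ^ m - 1, hn'⟩ ⟨2 ^ m - 1, hn'⟩ = 2 := by
  have hK := Nat.one_le_two_pow (n := m)
  simp only [PsiM, hadCore, Matrix.of_apply, sylvester]
  rw [if_pos (by constructor <;> omega), syl_congr m _ _ 0 0 (by omega) (by omega)
    (by simp [show 2^m - 1 + 1 = 2^m by omega])
    (by simp [show 2^m - 1 + 1 = 2^m by omega]), syl_col0]
  ring

lemma psi_mid_high (j : ℕ) (hj : j < 2 ^ m - 1)
    (hn' : 2 ^ m - 1 < 2 ^ (m+1) - 1) (hj' : 2 ^ m + j < 2 ^ (m+1) - 1) :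
    PsiM (m+1) ⟨2 ^ m - 1, hn'⟩ ⟨2 ^ m + j, hj'⟩ = 2 := by
  have hK := Nat.one_le_two_pow (n := m)
  simp only [PsiM, hadCore, Matrix.of_apply, sylvester]
  rw [if_pos (by constructor <;> omega), syl_congr m _ _ 0 (j+1) (by omega) (by omega)
    (by simp [show 2^m - 1 + 1 = 2^m by omega])
    (by simp [show 2^m + j + 1 = 2^m + (j+1) by omega,
      Nat.add_mod_left, Nat.mod_eq_of_lt (show j+1 < 2^m by omega)]), syl_row0]
  ring

lemma psi_high_high (i j : ℕ) (hi : i < 2 ^ m - 1) (hj : j < 2 ^ m - 1)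
    (hi' : 2 ^ m + i < 2 ^ (m+1) - 1) (hj' : 2 ^ m + j < 2 ^ (m+1) - 1) :
    PsiM (m+1) ⟨2 ^ m + i, hi'⟩ ⟨2 ^ m + j, hj'⟩ = 2 - PsiM m ⟨i, hi⟩ ⟨j, hj⟩ := by
  have hK := Nat.one_le_two_pow (n := m)
  simp only [PsiM, hadCore, Matrix.of_apply, sylvester]
  rw [if_pos (by constructor <;> omega), syl_congr m _ _ (i+1) (j+1) (by omega) (by omega)
    (by simp [show 2^m + i + 1 = 2^m + (i+1) by omega,
      Nat.add_mod_left, Nat.mod_eq_of_lt (show i+1 < 2^m by omega)])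
    (by simp [show 2^m + j + 1 = 2^m + (j+1) by omega,
      Nat.add_mod_left, Nat.mod_eq_of_lt (show j+1 < 2^m by omega)])]
  ring

end entries

/-- Split a sum over `Fin nn` with `nn = N + 1 + N` into low, middle, high parts. -/
lemma sum_split {N nn : ℕ} (h : nn = N + 1 + N) (g : Fin nn → ℝ) :
    ∑ j, g j = (∑ j : Fin N, g ⟨j.val, by omega⟩) + g ⟨N, by omega⟩ +
      ∑ j : Fin N, g ⟨N + 1 + j.val, by omega⟩ := by
  subst h
  have key : ∀ j : Fin (N + 1 + N), g j =
      (fun k => if hk : k < N + 1 + N then g ⟨k, hk⟩ else 0) j.val := by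
    intro j; simp [j.isLt]
  rw [Finset.sum_congr rfl (fun j _ => key j),
    Fin.sum_univ_eq_sum_range (fun k => if hk : k < N + 1 + N then g ⟨k, hk⟩ else 0),
    Finset.sum_range_add, Finset.sum_range_add, Finset.sum_range_one]
  congr 1
  · congr 1
    · rw [← Fin.sum_univ_eq_sum_range]
      exact Finset.sum_congr rfl fun j _ => by simp [show (j:ℕ) < N + 1 + N by omega]
    · simp [show N < N + 1 + N by omega]
  · rw [← Fin.sum_univ_eq_sum_range]
    exact Finset.sum_congr rfl fun j _ => by
      simp only [show N + 1 + (j:ℕ) < N + 1 + N by omega, dif_pos]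

/-- `H(a) = Σ_j ((Σa)·q_j − (Σa²)·(Ψa)_j) e^{−(Ψa)_j}` with `q_j = Σ_i a_i² Ψ_{ji}`;
it equals `(Σa)³ · Σ_i â_i²(b_i − b̄)`. -/
def Hfun (m : ℕ) (a : Fin (2 ^ m - 1) → ℝ) : ℝ :=
  ∑ j, ((∑ k, a k) * (∑ i, (a i) ^ 2 * PsiM m j i)
      - (∑ k, (a k) ^ 2) * ((PsiM m).mulVec a j)) * Real.exp (-((PsiM m).mulVec a j))

lemma F_eq (m : ℕ) (a : Fin (2 ^ m - 1) → ℝ) (hS : (∑ k, a k) ≠ 0) :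
    ∑ i, (a i / ∑ k, a k) ^ 2 * (bVec m a i - bbar m a) = Hfun m a / (∑ k, a k) ^ 3 := by
  set S := ∑ k, a k with hSdef
  rw [eq_div_iff (pow_ne_zero 3 hS)]
  have hmv : ∀ j, (PsiM m).mulVec a j = ∑ i, PsiM m j i * a i := fun j => by
    simp [Matrix.mulVec, dotProduct]
  have hsum1 : ∑ i, (a i) ^ 2 * bVec m a i
      = ∑ j, (∑ i, (a i) ^ 2 * PsiM m j i) * Real.exp (-((PsiM m).mulVec a j)) := by
    simp only [bVec, Finset.mul_sum, Finset.sum_mul]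
    rw [Finset.sum_comm]
    exact Finset.sum_congr rfl fun j _ => Finset.sum_congr rfl fun i _ => by
      rw [psi_symm]; ring
  have hsum2 : ∑ j, a j * bVec m a j
      = ∑ j, ((PsiM m).mulVec a j) * Real.exp (-((PsiM m).mulVec a j)) := by
    simp only [bVec, Finset.mul_sum, Finset.sum_mul]
    rw [Finset.sum_comm]
    refine Finset.sum_congr rfl fun j _ => ?_
    rw [hmv j, Finset.sum_mul]
    exact Finset.sum_congr rfl fun i _ => by rw [psi_symm]; ring
  have hbbar : bbar m a * S = ∑ j, a j * bVec m a j := by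
    simp only [bbar, ← hSdef, Finset.sum_mul]
    exact Finset.sum_congr rfl fun j _ => by field_simp
  have expand : (∑ i, (a i / S) ^ 2 * (bVec m a i - bbar m a)) * S ^ 3
      = S * (∑ i, (a i) ^ 2 * bVec m a i) - (bbar m a * S) * (∑ i, (a i) ^ 2) := by
    rw [Finset.sum_mul, Finset.mul_sum, Finset.mul_sum, ← Finset.sum_sub_distrib]
    exact Finset.sum_congr rfl fun i _ => by field_simp
  rw [expand, hsum1, hbbar, hsum2]
  have hH : S * (∑ j, (∑ i, (a i) ^ 2 * PsiM m j i) * Real.exp (-((PsiM m).mulVec a j)))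
      - (∑ k, (a k) ^ 2) * (∑ j, ((PsiM m).mulVec a j) * Real.exp (-((PsiM m).mulVec a j)))
      = Hfun m a := by
    simp only [Hfun, ← hSdef]
    rw [Finset.mul_sum, Finset.mul_sum, ← Finset.sum_sub_distrib]
    exact Finset.sum_congr rfl fun j _ => by ring
  rw [← hH]; ring

lemma continuous_Hfun {m : ℕ} (A : ℝ → Fin (2 ^ m - 1) → ℝ)
    (hA : ∀ i, Continuous fun t => A t i) : Continuous fun t => Hfun m (A t) := by
  unfold Hfun
  simp only [Matrix.mulVec, dotProduct]
  apply continuous_finset_sum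
  intro j _
  apply Continuous.mul
  · apply Continuous.sub
    · exact (continuous_finset_sum _ fun k _ => hA k).mul
        (continuous_finset_sum _ fun i _ => ((hA i).pow 2).mul continuous_const)
    · exact (continuous_finset_sum _ fun k _ => (hA k).pow 2).mul
        (continuous_finset_sum _ fun i _ => continuous_const.mul (hA i))
  · exact Real.continuous_exp.comp
      (continuous_finset_sum _ fun i _ => continuous_const.mul (hA i)).neg

lemma exists_pos_arg (f : ℝ → ℝ) (hf : Continuous f) (h0 : 0 < f 0) :
    ∃ t : ℝ, 0 < t ∧ 0 < f t := by
  obtain ⟨δ, hδ, h⟩ := Metric.continuousAt_iff.mp hf.continuousAt (f 0) h0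
  refine ⟨δ / 2, by positivity, ?_⟩
  have hd : dist (δ / 2) 0 < δ := by
    rw [Real.dist_eq, sub_zero, abs_of_pos (by positivity)]; linarith
  have := h hd
  rw [Real.dist_eq] at this
  have := abs_lt.mp this
  linarith [this.1]

/-- The lifted vector `(a/2, t, a/2)` used in the induction step. -/
def liftVec (m : ℕ) (a : Fin (2 ^ m - 1) → ℝ) (t : ℝ) (i : Fin (2 ^ (m + 1) - 1)) : ℝ :=
  if h1 : (i : ℕ) < 2 ^ m - 1 then a ⟨i, h1⟩ / 2
  else if (i : ℕ) = 2 ^ m - 1 then t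
  else if h3 : (i : ℕ) - 2 ^ m < 2 ^ m - 1 then a ⟨(i : ℕ) - 2 ^ m, h3⟩ / 2 else 0

lemma liftVec_low (m : ℕ) (a : Fin (2 ^ m - 1) → ℝ) (t : ℝ) (j : Fin (2 ^ m - 1))
    (h : (j : ℕ) < 2 ^ (m + 1) - 1) : liftVec m a t ⟨j, h⟩ = a j / 2 := by
  simp [liftVec, j.isLt]

lemma liftVec_mid (m : ℕ) (a : Fin (2 ^ m - 1) → ℝ) (t : ℝ)
    (h : 2 ^ m - 1 < 2 ^ (m + 1) - 1) : liftVec m a t ⟨2 ^ m - 1, h⟩ = t := by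
  simp [liftVec]

lemma liftVec_high (m : ℕ) (a : Fin (2 ^ m - 1) → ℝ) (t : ℝ) (j : Fin (2 ^ m - 1))
    (h : 2 ^ m - 1 + 1 + (j : ℕ) < 2 ^ (m + 1) - 1) :
    liftVec m a t ⟨2 ^ m - 1 + 1 + (j : ℕ), h⟩ = a j / 2 := by
  have hK := Nat.one_le_two_pow (n := m)
  have hj := j.isLt
  simp only [liftVec]
  rw [dif_neg (by omega), if_neg (by omega)]
  have e : 2 ^ m - 1 + 1 + (j : ℕ) - 2 ^ m = (j : ℕ) := by omega
  simp only [Fin.val_mk, e, dif_pos j.isLt, Fin.eta]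

section shifted
variable (m : ℕ)

lemma psi_low_high' (i j : ℕ) (hi : i < 2 ^ m - 1) (hj : j < 2 ^ m - 1)
    (hi' : i < 2 ^ (m+1) - 1) (hj' : 2 ^ m - 1 + 1 + j < 2 ^ (m+1) - 1) :
    PsiM (m+1) ⟨i, hi'⟩ ⟨2 ^ m - 1 + 1 + j, hj'⟩ = PsiM m ⟨i, hi⟩ ⟨j, hj⟩ := by
  have hK := Nat.one_le_two_pow (n := m)
  rw [show (⟨2 ^ m - 1 + 1 + j, hj'⟩ : Fin (2 ^ (m+1) - 1)) = ⟨2 ^ m + j, by omega⟩ from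
    Fin.ext (by simp; omega)]
  exact psi_low_high m i j hi hj hi' _

lemma psi_high_low' (i j : ℕ) (hi : i < 2 ^ m - 1) (hj : j < 2 ^ m - 1)
    (hi' : 2 ^ m - 1 + 1 + i < 2 ^ (m+1) - 1) (hj' : j < 2 ^ (m+1) - 1) :
    PsiM (m+1) ⟨2 ^ m - 1 + 1 + i, hi'⟩ ⟨j, hj'⟩ = PsiM m ⟨i, hi⟩ ⟨j, hj⟩ := by
  rw [psi_symm, psi_low_high' m j i hj hi hj' hi', psi_symm]

lemma psi_mid_low (j : ℕ) (hj : j < 2 ^ m - 1)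
    (hn' : 2 ^ m - 1 < 2 ^ (m+1) - 1) (hj' : j < 2 ^ (m+1) - 1) :
    PsiM (m+1) ⟨2 ^ m - 1, hn'⟩ ⟨j, hj'⟩ = 0 := by
  rw [psi_symm, psi_low_mid m j hj hj' hn']

lemma psi_mid_high' (j : ℕ) (hj : j < 2 ^ m - 1)
    (hn' : 2 ^ m - 1 < 2 ^ (m+1) - 1) (hj' : 2 ^ m - 1 + 1 + j < 2 ^ (m+1) - 1) :
    PsiM (m+1) ⟨2 ^ m - 1, hn'⟩ ⟨2 ^ m - 1 + 1 + j, hj'⟩ = 2 := by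
  have hK := Nat.one_le_two_pow (n := m)
  rw [show (⟨2 ^ m - 1 + 1 + j, hj'⟩ : Fin (2 ^ (m+1) - 1)) = ⟨2 ^ m + j, by omega⟩ from
    Fin.ext (by simp; omega)]
  exact psi_mid_high m j hj hn' _

lemma psi_high_mid' (j : ℕ) (hj : j < 2 ^ m - 1)
    (hn' : 2 ^ m - 1 < 2 ^ (m+1) - 1) (hj' : 2 ^ m - 1 + 1 + j < 2 ^ (m+1) - 1) :
    PsiM (m+1) ⟨2 ^ m - 1 + 1 + j, hj'⟩ ⟨2 ^ m - 1, hn'⟩ = 2 := by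
  rw [psi_symm, psi_mid_high' m j hj hn' hj']

lemma psi_high_high' (i j : ℕ) (hi : i < 2 ^ m - 1) (hj : j < 2 ^ m - 1)
    (hi' : 2 ^ m - 1 + 1 + i < 2 ^ (m+1) - 1) (hj' : 2 ^ m - 1 + 1 + j < 2 ^ (m+1) - 1) :
    PsiM (m+1) ⟨2 ^ m - 1 + 1 + i, hi'⟩ ⟨2 ^ m - 1 + 1 + j, hj'⟩ = 2 - PsiM m ⟨i, hi⟩ ⟨j, hj⟩ := by
  have hK := Nat.one_le_two_pow (n := m)
  rw [show (⟨2 ^ m - 1 + 1 + i, hi'⟩ : Fin (2 ^ (m+1) - 1)) = ⟨2 ^ m + i, by omega⟩ from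
    Fin.ext (by simp; omega),
    show (⟨2 ^ m - 1 + 1 + j, hj'⟩ : Fin (2 ^ (m+1) - 1)) = ⟨2 ^ m + j, by omega⟩ from
    Fin.ext (by simp; omega)]
  exact psi_high_high m i j hi hj _ _

end shifted

/-- Evaluated three-way split of a sum. -/
lemma sum_split_eval {N nn : ℕ} (h : nn = N + 1 + N) (g : Fin nn → ℝ)
    (L : Fin N → ℝ) (Mid : ℝ) (H : Fin N → ℝ)
    (hL : ∀ (j : Fin N) (hj : (j : ℕ) < nn), g ⟨j, hj⟩ = L j)
    (hMid : ∀ (hm : N < nn), g ⟨N, hm⟩ = Mid)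
    (hH : ∀ (j : Fin N) (hj : N + 1 + (j : ℕ) < nn), g ⟨N + 1 + (j : ℕ), hj⟩ = H j) :
    ∑ j, g j = (∑ j, L j) + Mid + ∑ j, H j := by
  rw [sum_split h g]
  congr 1
  · congr 1
    · exact Finset.sum_congr rfl fun j _ => hL j _
    · exact hMid _
  · exact Finset.sum_congr rfl fun j _ => hH j _

lemma lift_zero (m : ℕ) (a : Fin (2 ^ m - 1) → ℝ) :
    Hfun (m + 1) (liftVec m a 0) = Hfun m a / 2 := by
  have hK := Nat.one_le_two_pow (n := m)
  have hsplit : 2 ^ (m + 1) - 1 = (2 ^ m - 1) + 1 + (2 ^ m - 1) := by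
    have h2 : 2 ^ (m + 1) = 2 * 2 ^ m := by ring
    omega
  set b := liftVec m a 0 with hb
  have hmv : ∀ j, (PsiM (m+1)).mulVec b j = ∑ i, PsiM (m+1) j i * b i := fun j => by
    simp [Matrix.mulVec, dotProduct]
  have hmv0 : ∀ j, (PsiM m).mulVec a j = ∑ i, PsiM m j i * a i := fun j => by
    simp [Matrix.mulVec, dotProduct]
  -- total sum of b
  have hbS : ∑ k, b k = ∑ k, a k := by
    rw [sum_split_eval hsplit b (fun j => a j / 2) 0 (fun j => a j / 2)
      (fun j hj => by rw [hb]; exact liftVec_low m a 0 j hj)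
      (fun hm => by rw [hb]; exact liftVec_mid m a 0 hm)
      (fun j hj => by rw [hb]; exact liftVec_high m a 0 j hj), ← Finset.sum_div]
    ring
  -- sum of squares of b
  have hbN : ∑ k, (b k) ^ 2 = (∑ k, (a k) ^ 2) / 2 := by
    rw [sum_split_eval hsplit (fun k => (b k) ^ 2)
      (fun j => (a j) ^ 2 / 4) 0 (fun j => (a j) ^ 2 / 4)
      (fun j hj => by show b ⟨(j : ℕ), hj⟩ ^ 2 = _; rw [hb, liftVec_low m a 0 j hj]; ring)
      (fun hm => by show b ⟨2 ^ m - 1, hm⟩ ^ 2 = _; rw [hb, liftVec_mid m a 0 hm]; ring)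
      (fun j hj => by show b ⟨2 ^ m - 1 + 1 + (j : ℕ), hj⟩ ^ 2 = _
                      rw [hb, liftVec_high m a 0 j hj]; ring), ← Finset.sum_div]
    ring
  -- row sums (mulVec) of b
  have hr_low : ∀ (j : Fin (2 ^ m - 1)) (hj : (j : ℕ) < 2 ^ (m + 1) - 1),
      (PsiM (m+1)).mulVec b ⟨(j : ℕ), hj⟩ = (PsiM m).mulVec a j := by
    intro j hj
    rw [hmv, sum_split_eval hsplit (fun i => PsiM (m+1) ⟨(j : ℕ), hj⟩ i * b i)
      (fun i => PsiM m j i * a i / 2) 0 (fun i => PsiM m j i * a i / 2)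
      (fun i hi => by
        show PsiM (m+1) ⟨(j : ℕ), hj⟩ ⟨(i : ℕ), hi⟩ * b ⟨(i : ℕ), hi⟩ = _
        rw [hb, liftVec_low m a 0 i hi, psi_low_low m (j : ℕ) (i : ℕ) j.isLt i.isLt hj hi,
          Fin.eta, Fin.eta]; ring)
      (fun hm => by
        show PsiM (m+1) ⟨(j : ℕ), hj⟩ ⟨2 ^ m - 1, hm⟩ * b ⟨2 ^ m - 1, hm⟩ = _
        rw [hb, liftVec_mid m a 0 hm, psi_low_mid m (j : ℕ) j.isLt hj hm]; ring)
      (fun i hi => by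
        show PsiM (m+1) ⟨(j : ℕ), hj⟩ ⟨2 ^ m - 1 + 1 + (i : ℕ), hi⟩ *
          b ⟨2 ^ m - 1 + 1 + (i : ℕ), hi⟩ = _
        rw [hb, liftVec_high m a 0 i hi,
          psi_low_high' m (j : ℕ) (i : ℕ) j.isLt i.isLt hj hi, Fin.eta, Fin.eta]; ring),
      ← Finset.sum_div, hmv0]
    ring
  have hr_mid : ∀ (hm : 2 ^ m - 1 < 2 ^ (m + 1) - 1),
      (PsiM (m+1)).mulVec b ⟨2 ^ m - 1, hm⟩ = ∑ k, a k := by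
    intro hm
    rw [hmv, sum_split_eval hsplit (fun i => PsiM (m+1) ⟨2 ^ m - 1, hm⟩ i * b i)
      (fun _ => 0) 0 (fun i => a i)
      (fun i hi => by
        show PsiM (m+1) ⟨2 ^ m - 1, hm⟩ ⟨(i : ℕ), hi⟩ * b ⟨(i : ℕ), hi⟩ = _
        rw [hb, liftVec_low m a 0 i hi, psi_mid_low m (i : ℕ) i.isLt hm hi]; ring)
      (fun hm' => by
        show PsiM (m+1) ⟨2 ^ m - 1, hm⟩ ⟨2 ^ m - 1, hm'⟩ * b ⟨2 ^ m - 1, hm'⟩ = _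
        rw [hb, liftVec_mid m a 0 hm']; ring)
      (fun i hi => by
        show PsiM (m+1) ⟨2 ^ m - 1, hm⟩ ⟨2 ^ m - 1 + 1 + (i : ℕ), hi⟩ *
          b ⟨2 ^ m - 1 + 1 + (i : ℕ), hi⟩ = _
        rw [hb, liftVec_high m a 0 i hi, psi_mid_high' m (i : ℕ) i.isLt hm hi]; ring)]
    simp
  have hr_high : ∀ (j : Fin (2 ^ m - 1)) (hj : 2 ^ m - 1 + 1 + (j : ℕ) < 2 ^ (m + 1) - 1),
      (PsiM (m+1)).mulVec b ⟨2 ^ m - 1 + 1 + (j : ℕ), hj⟩ = ∑ k, a k := by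
    intro j hj
    rw [hmv, sum_split_eval hsplit
      (fun i => PsiM (m+1) ⟨2 ^ m - 1 + 1 + (j : ℕ), hj⟩ i * b i)
      (fun i => PsiM m j i * a i / 2) 0 (fun i => (2 - PsiM m j i) * a i / 2)
      (fun i hi => by
        show PsiM (m+1) ⟨2 ^ m - 1 + 1 + (j : ℕ), hj⟩ ⟨(i : ℕ), hi⟩ * b ⟨(i : ℕ), hi⟩ = _
        rw [hb, liftVec_low m a 0 i hi,
          psi_high_low' m (j : ℕ) (i : ℕ) j.isLt i.isLt hj hi, Fin.eta, Fin.eta]; ring)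
      (fun hm => by
        show PsiM (m+1) ⟨2 ^ m - 1 + 1 + (j : ℕ), hj⟩ ⟨2 ^ m - 1, hm⟩ *
          b ⟨2 ^ m - 1, hm⟩ = _
        rw [hb, liftVec_mid m a 0 hm]; ring)
      (fun i hi => by
        show PsiM (m+1) ⟨2 ^ m - 1 + 1 + (j : ℕ), hj⟩ ⟨2 ^ m - 1 + 1 + (i : ℕ), hi⟩ *
          b ⟨2 ^ m - 1 + 1 + (i : ℕ), hi⟩ = _
        rw [hb, liftVec_high m a 0 i hi,
          psi_high_high' m (j : ℕ) (i : ℕ) j.isLt i.isLt hj hi, Fin.eta, Fin.eta]; ring)]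
    rw [add_zero, ← Finset.sum_add_distrib]
    exact Finset.sum_congr rfl fun i _ => by ring
  -- column-square sums of b
  have hq_low : ∀ (j : Fin (2 ^ m - 1)) (hj : (j : ℕ) < 2 ^ (m + 1) - 1),
      (∑ i, (b i) ^ 2 * PsiM (m+1) ⟨(j : ℕ), hj⟩ i)
        = (∑ i, (a i) ^ 2 * PsiM m j i) / 2 := by
    intro j hj
    rw [sum_split_eval hsplit (fun i => (b i) ^ 2 * PsiM (m+1) ⟨(j : ℕ), hj⟩ i)
      (fun i => (a i) ^ 2 * PsiM m j i / 4) 0 (fun i => (a i) ^ 2 * PsiM m j i / 4)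
      (fun i hi => by
        show (b ⟨(i : ℕ), hi⟩) ^ 2 * PsiM (m+1) ⟨(j : ℕ), hj⟩ ⟨(i : ℕ), hi⟩ = _
        rw [hb, liftVec_low m a 0 i hi, psi_low_low m (j : ℕ) (i : ℕ) j.isLt i.isLt hj hi,
          Fin.eta, Fin.eta]; ring)
      (fun hm => by
        show (b ⟨2 ^ m - 1, hm⟩) ^ 2 * PsiM (m+1) ⟨(j : ℕ), hj⟩ ⟨2 ^ m - 1, hm⟩ = _
        rw [hb, liftVec_mid m a 0 hm]; ring)
      (fun i hi => by
        show (b ⟨2 ^ m - 1 + 1 + (i : ℕ), hi⟩) ^ 2 *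
          PsiM (m+1) ⟨(j : ℕ), hj⟩ ⟨2 ^ m - 1 + 1 + (i : ℕ), hi⟩ = _
        rw [hb, liftVec_high m a 0 i hi,
          psi_low_high' m (j : ℕ) (i : ℕ) j.isLt i.isLt hj hi, Fin.eta, Fin.eta]; ring),
      ← Finset.sum_div]
    ring
  have hq_mid : ∀ (hm : 2 ^ m - 1 < 2 ^ (m + 1) - 1),
      (∑ i, (b i) ^ 2 * PsiM (m+1) ⟨2 ^ m - 1, hm⟩ i) = (∑ k, (a k) ^ 2) / 2 := by
    intro hm
    rw [sum_split_eval hsplit (fun i => (b i) ^ 2 * PsiM (m+1) ⟨2 ^ m - 1, hm⟩ i)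
      (fun _ => 0) 0 (fun i => (a i) ^ 2 / 2)
      (fun i hi => by
        show (b ⟨(i : ℕ), hi⟩) ^ 2 * PsiM (m+1) ⟨2 ^ m - 1, hm⟩ ⟨(i : ℕ), hi⟩ = _
        rw [hb, liftVec_low m a 0 i hi, psi_mid_low m (i : ℕ) i.isLt hm hi]; ring)
      (fun hm' => by
        show (b ⟨2 ^ m - 1, hm'⟩) ^ 2 * PsiM (m+1) ⟨2 ^ m - 1, hm⟩ ⟨2 ^ m - 1, hm'⟩ = _
        rw [hb, liftVec_mid m a 0 hm']; ring)
      (fun i hi => by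
        show (b ⟨2 ^ m - 1 + 1 + (i : ℕ), hi⟩) ^ 2 *
          PsiM (m+1) ⟨2 ^ m - 1, hm⟩ ⟨2 ^ m - 1 + 1 + (i : ℕ), hi⟩ = _
        rw [hb, liftVec_high m a 0 i hi, psi_mid_high' m (i : ℕ) i.isLt hm hi]; ring),
      ← Finset.sum_div]
    simp
  have hq_high : ∀ (j : Fin (2 ^ m - 1)) (hj : 2 ^ m - 1 + 1 + (j : ℕ) < 2 ^ (m + 1) - 1),
      (∑ i, (b i) ^ 2 * PsiM (m+1) ⟨2 ^ m - 1 + 1 + (j : ℕ), hj⟩ i)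
        = (∑ k, (a k) ^ 2) / 2 := by
    intro j hj
    rw [sum_split_eval hsplit
      (fun i => (b i) ^ 2 * PsiM (m+1) ⟨2 ^ m - 1 + 1 + (j : ℕ), hj⟩ i)
      (fun i => (a i) ^ 2 * PsiM m j i / 4) 0
      (fun i => (a i) ^ 2 * (2 - PsiM m j i) / 4)
      (fun i hi => by
        show (b ⟨(i : ℕ), hi⟩) ^ 2 *
          PsiM (m+1) ⟨2 ^ m - 1 + 1 + (j : ℕ), hj⟩ ⟨(i : ℕ), hi⟩ = _
        rw [hb, liftVec_low m a 0 i hi,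
          psi_high_low' m (j : ℕ) (i : ℕ) j.isLt i.isLt hj hi, Fin.eta, Fin.eta]; ring)
      (fun hm => by
        show (b ⟨2 ^ m - 1, hm⟩) ^ 2 *
          PsiM (m+1) ⟨2 ^ m - 1 + 1 + (j : ℕ), hj⟩ ⟨2 ^ m - 1, hm⟩ = _
        rw [hb, liftVec_mid m a 0 hm]; ring)
      (fun i hi => by
        show (b ⟨2 ^ m - 1 + 1 + (i : ℕ), hi⟩) ^ 2 *
          PsiM (m+1) ⟨2 ^ m - 1 + 1 + (j : ℕ), hj⟩ ⟨2 ^ m - 1 + 1 + (i : ℕ), hi⟩ = _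
        rw [hb, liftVec_high m a 0 i hi,
          psi_high_high' m (j : ℕ) (i : ℕ) j.isLt i.isLt hj hi, Fin.eta, Fin.eta]; ring)]
    rw [add_zero, ← Finset.sum_add_distrib,
      Finset.sum_congr rfl (fun (i : Fin (2 ^ m - 1)) _ =>
        show (a i) ^ 2 * PsiM m j i / 4 + (a i) ^ 2 * (2 - PsiM m j i) / 4
          = (a i) ^ 2 / 2 from by ring),
      ← Finset.sum_div]
  -- assemble
  unfold Hfun
  rw [hbS, hbN]
  rw [sum_split_eval hsplit
    (fun J => ((∑ k, a k) * (∑ i, (b i) ^ 2 * PsiM (m+1) J i)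
      - (∑ k, (a k) ^ 2) / 2 * ((PsiM (m+1)).mulVec b J))
        * Real.exp (-((PsiM (m+1)).mulVec b J)))
    (fun j => (((∑ k, a k) * (∑ i, (a i) ^ 2 * PsiM m j i)
      - (∑ k, (a k) ^ 2) * ((PsiM m).mulVec a j))
        * Real.exp (-((PsiM m).mulVec a j))) / 2) 0 (fun _ => 0)
    (fun j hj => by
      show ((∑ k, a k) * (∑ i, (b i) ^ 2 * PsiM (m+1) ⟨(j : ℕ), hj⟩ i)
        - (∑ k, (a k) ^ 2) / 2 * ((PsiM (m+1)).mulVec b ⟨(j : ℕ), hj⟩))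
          * Real.exp (-((PsiM (m+1)).mulVec b ⟨(j : ℕ), hj⟩)) = _
      rw [hq_low j hj, hr_low j hj]; ring)
    (fun hm => by
      show ((∑ k, a k) * (∑ i, (b i) ^ 2 * PsiM (m+1) ⟨2 ^ m - 1, hm⟩ i)
        - (∑ k, (a k) ^ 2) / 2 * ((PsiM (m+1)).mulVec b ⟨2 ^ m - 1, hm⟩))
          * Real.exp (-((PsiM (m+1)).mulVec b ⟨2 ^ m - 1, hm⟩)) = _
      rw [hq_mid hm, hr_mid hm]; ring)
    (fun j hj => by
      show ((∑ k, a k) * (∑ i, (b i) ^ 2 * PsiM (m+1) ⟨2 ^ m - 1 + 1 + (j : ℕ), hj⟩ i)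
        - (∑ k, (a k) ^ 2) / 2 * ((PsiM (m+1)).mulVec b ⟨2 ^ m - 1 + 1 + (j : ℕ), hj⟩))
          * Real.exp (-((PsiM (m+1)).mulVec b ⟨2 ^ m - 1 + 1 + (j : ℕ), hj⟩)) = _
      rw [hq_high j hj, hr_high j hj]; ring),
    ← Finset.sum_div]
  simp

lemma step (m : ℕ) (a : Fin (2 ^ m - 1) → ℝ) (ha : ∀ i, 0 < a i) (hH : 0 < Hfun m a) :
    ∃ a' : Fin (2 ^ (m + 1) - 1) → ℝ, (∀ i, 0 < a' i) ∧ 0 < Hfun (m + 1) a' := by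
  have hK := Nat.one_le_two_pow (n := m)
  have h2 : 2 ^ (m + 1) = 2 * 2 ^ m := by ring
  have hcoord : ∀ i : Fin (2 ^ (m + 1) - 1), Continuous fun t => liftVec m a t i := by
    intro i
    unfold liftVec
    by_cases h1 : (i : ℕ) < 2 ^ m - 1
    · simp only [dif_pos h1]; exact continuous_const
    · simp only [dif_neg h1]
      by_cases hm : (i : ℕ) = 2 ^ m - 1
      · simp only [if_pos hm]; exact continuous_id
      · simp only [if_neg hm]
        by_cases h3 : (i : ℕ) - 2 ^ m < 2 ^ m - 1
        · simp only [dif_pos h3]; exact continuous_const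
        · simp only [dif_neg h3]; exact continuous_const
  have hcont : Continuous fun t => Hfun (m + 1) (liftVec m a t) := continuous_Hfun _ hcoord
  have h0 : 0 < Hfun (m + 1) (liftVec m a 0) := by rw [lift_zero]; linarith
  obtain ⟨t, ht, hpos⟩ := exists_pos_arg _ hcont h0
  refine ⟨liftVec m a t, ?_, hpos⟩
  intro i
  have hi := i.isLt
  unfold liftVec
  split_ifs with h1 hm h3
  · exact half_pos (ha _)
  · exact ht
  · exact half_pos (ha _)
  · exact absurd rfl (by omega : ¬ (0 : ℕ) = 0)

lemma sum_fin7 (f : Fin (2 ^ 3 - 1) → ℝ) :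
    ∑ j, f j = f ⟨0, by norm_num⟩ + f ⟨1, by norm_num⟩ + f ⟨2, by norm_num⟩ + f ⟨3, by norm_num⟩
      + f ⟨4, by norm_num⟩ + f ⟨5, by norm_num⟩ + f ⟨6, by norm_num⟩ := by
  rw [show (∑ j, f j) = ∑ j : Fin (2 ^ 3 - 1),
      (fun k => if h : k < 2 ^ 3 - 1 then f ⟨k, h⟩ else 0) j.val from
    Finset.sum_congr rfl (fun j _ => by simp [j.isLt])]
  rw [Fin.sum_univ_eq_sum_range (fun k => if h : k < 2 ^ 3 - 1 then f ⟨k, h⟩ else 0) (2 ^ 3 - 1)]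
  norm_num [Finset.sum_range_succ]

/-- The base witness for `m = 3`: value `1` on the vectors `{3,4,7}`, `6/5` on `5`,
and a small `t > 0` elsewhere. -/
def baseVec (t : ℝ) : Fin (2 ^ 3 - 1) → ℝ := fun i =>
  if (i : ℕ) = 2 ∨ (i : ℕ) = 3 ∨ (i : ℕ) = 6 then 1 else if (i : ℕ) = 4 then 6 / 5 else t

set_option maxHeartbeats 2000000 in
lemma base_pos : 0 < Hfun 3 (baseVec 0) := by
  unfold Hfun
  simp only [Matrix.mulVec, dotProduct]
  simp only [sum_fin7]
  norm_num [baseVec, PsiM, hadCore, sylvester]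
  have h1 : (13 : ℝ) / 5 < Real.exp (8 / 5) := by
    have := Real.add_one_lt_exp (x := (8 : ℝ) / 5) (by norm_num); linarith
  have h2 : Real.exp (-(12 / 5 : ℝ)) = Real.exp (8 / 5) * Real.exp (-4) := by
    rw [← Real.exp_add]; norm_num
  have h3 := Real.exp_pos (-(32 / 5) : ℝ)
  have h4 := Real.exp_pos (-4 : ℝ)
  nlinarith [mul_lt_mul_of_pos_right h1 h4]

lemma base_exists : ∃ a : Fin (2 ^ 3 - 1) → ℝ, (∀ i, 0 < a i) ∧ 0 < Hfun 3 a := by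
  have hcoord : ∀ i, Continuous fun t => baseVec t i := by
    intro i; unfold baseVec
    by_cases h1 : (i : ℕ) = 2 ∨ (i : ℕ) = 3 ∨ (i : ℕ) = 6
    · simp only [if_pos h1]; exact continuous_const
    · simp only [if_neg h1]
      by_cases h2 : (i : ℕ) = 4
      · simp only [if_pos h2]; exact continuous_const
      · simp only [if_neg h2]; exact continuous_id
  obtain ⟨t, ht, hpos⟩ := exists_pos_arg _ (continuous_Hfun baseVec hcoord) base_pos
  exact ⟨baseVec t, fun i => by
    unfold baseVec; split_ifs <;> first | exact ht | norm_num, hpos⟩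

lemma exists_Hpos (m : ℕ) (hm : 3 ≤ m) :
    ∃ a : Fin (2 ^ m - 1) → ℝ, (∀ i, 0 < a i) ∧ 0 < Hfun m a := by
  induction m, hm using Nat.le_induction with
  | base => exact base_exists
  | succ n hn ih =>
    obtain ⟨a, ha, hH⟩ := ih
    exact step n a ha hH

/-- non-monotonicity of the L2 metric for `K ≥ 8`.
For `K = 2^m` with `m ≥ 3`, there exists `a ∈ ℝ^{K−1}` with strictly positive entries such
that `Σ_i â_i²(b_i(a) − b̄(a)) > 0`, i.e. the time derivative
`dM/dt = (1/D(a))·Σ_i â_i²(b_i(a) − b̄(a))` of the metric `M` along the reduced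
cross-entropy gradient flow is strictly positive at `a`; hence for `K ≥ 8` the metric `M`
is not monotonically decreasing along all trajectories with positive initialization. -/
theorem metric_not_monotone_K_ge_8 (m : ℕ) (hm : 3 ≤ m) :
    ∃ a : Fin (2 ^ m - 1) → ℝ, (∀ i, 0 < a i) ∧
      0 < ∑ i, (a i / ∑ k, a k) ^ 2 * (bVec m a i - bbar m a) ∧
      0 < (1 / Dden m a) * ∑ i, (a i / ∑ k, a k) ^ 2 * (bVec m a i - bbar m a) := by
  obtain ⟨a, ha, hH⟩ := exists_Hpos m hm
  have hcard : 0 < 2 ^ m - 1 := by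
    have h8 : (8 : ℕ) ≤ 2 ^ m := by
      calc (8 : ℕ) = 2 ^ 3 := by norm_num
      _ ≤ 2 ^ m := Nat.pow_le_pow_right (by norm_num) hm
    omega
  have : Nonempty (Fin (2 ^ m - 1)) := Fin.pos_iff_nonempty.mp hcard
  have hS : 0 < ∑ k, a k := Finset.sum_pos (fun i _ => ha i) Finset.univ_nonempty
  have hFpos : 0 < ∑ i, (a i / ∑ k, a k) ^ 2 * (bVec m a i - bbar m a) := by
    rw [F_eq m a (ne_of_gt hS)]
    exact div_pos hH (by positivity)
  refine ⟨a, ha, hFpos, ?_⟩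
  have hD : 0 < Dden m a := by
    unfold Dden
    have hnn : 0 ≤ ∑ j, Real.exp (-((PsiM m).mulVec a j)) :=
      Finset.sum_nonneg fun j _ => (Real.exp_pos _).le
    linarith
  exact mul_pos (by positivity) hFpos
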